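/- Let 0 < α < 2 and s > 0 satisfy 1 − α < s/(2(s+1)), and set σ = (1 + α − s/(2(s+1)))/α, so that σ < 3. Then for every γ > 0, N > 0 and M > 0 there exists a constant C = C(α, s, γ, N, M) > 0 such that for every nonnegative continuous 2π-periodic function u : ℝ → ℝ with ∫_{−π}^{π} u ≤ N and ‖u‖_{L^{1+s}(𝕋)} ≤ M, and every x ∈ ℝ, one has I_α u(x) ≥ γ u(x)³ − C ( u(x)^σ + u(x) + 1 ). -/

import Mathlib

open MeasureTheory Real

/-- The constant `c_σ = Γ(1+σ) cos((1−σ)π/2) / π`. -/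
noncomputable def cFrac (σ : ℝ) : ℝ :=
  Real.Gamma (1 + σ) * Real.cos ((1 - σ) * Real.pi / 2) / Real.pi

/-- The periodized kernel `K_σ(η) = ∑_{k∈ℤ} |η + 2kπ|^{-(1+σ)}`. -/
noncomputable def Kper (σ η : ℝ) : ℝ :=
  ∑' k : ℤ, |η + 2 * (k : ℝ) * Real.pi| ^ (-(1 + σ))

/-- The fractional Laplacian `Λ^σ f` of a `2π`-periodic function, defined by
`Λ^σ f(x) = (c_σ/2) ∫_{-π}^{π} (2f(x) − f(x+η) − f(x−η)) K_σ(η) dη`. -/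
noncomputable def fracLap (σ : ℝ) (f : ℝ → ℝ) (x : ℝ) : ℝ :=
  (cFrac σ / 2) *
    ∫ η in (-Real.pi)..Real.pi, (2 * f x - f (x + η) - f (x - η)) * Kper σ η

/-- `I_α u(x) = c_α ∫_{-π}^{π} (u(x) − u(x−η))² K_α(η) dη`, taken with values in `[0,∞]`
(the integrand is nonnegative). -/
noncomputable def IfracE (α : ℝ) (u : ℝ → ℝ) (x : ℝ) : ENNReal :=
  ENNReal.ofReal (cFrac α) *
    ∫⁻ η in Set.Ioc (-Real.pi) Real.pi, ENNReal.ofReal ((u x - u (x - η)) ^ 2 * Kper α η)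

section Kernel

variable {α : ℝ}

/-- tail constant -/
noncomputable def Ctail (c : ℝ) : ℝ := ∑' k : ℤ, (Real.pi * |(k : ℝ)|) ^ (-c)

lemma summable_tail {c : ℝ} (hc : 1 < c) :
    Summable (fun k : ℤ => (Real.pi * |(k : ℝ)|) ^ (-c)) := by
  have h := Real.summable_abs_int_rpow hc
  have : (fun k : ℤ => (Real.pi * |(k : ℝ)|) ^ (-c))
      = fun k : ℤ => Real.pi ^ (-c) * |(k : ℝ)| ^ (-c) := by
    funext k
    exact Real.mul_rpow Real.pi_pos.le (abs_nonneg _)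
  rw [this]
  exact h.mul_left _

lemma Ctail_nonneg {c : ℝ} : 0 ≤ Ctail c :=
  tsum_nonneg fun k => Real.rpow_nonneg (mul_nonneg Real.pi_pos.le (abs_nonneg _)) _

lemma term_le {c η : ℝ} (hc : 1 < c) (hη : 0 < η) (hηπ : η ≤ Real.pi) (k : ℤ) :
    |η + 2 * (k : ℝ) * Real.pi| ^ (-c)
      ≤ (if k = 0 then η ^ (-c) else 0) + (Real.pi * |(k : ℝ)|) ^ (-c) := by
  rcases eq_or_ne k 0 with rfl | hk
  · simp only [if_pos rfl, Int.cast_zero, abs_zero, mul_zero, zero_mul, add_zero]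
    rw [abs_of_pos hη, Real.zero_rpow (by intro h; nlinarith [neg_eq_zero.mp h] : -c ≠ 0)]
    simp
  · rw [if_neg hk, zero_add]
    have hk1 : (1 : ℝ) ≤ |(k : ℝ)| := by
      rw [← Int.cast_abs]
      exact_mod_cast Int.one_le_abs hk
    have hb : Real.pi * |(k : ℝ)| ≤ |η + 2 * (k : ℝ) * Real.pi| := by
      have h1 : |2 * (k : ℝ) * Real.pi| = 2 * |(k : ℝ)| * Real.pi := by
        rw [abs_mul, abs_mul]
        rw [abs_of_nonneg (by norm_num : (0:ℝ) ≤ 2), abs_of_nonneg Real.pi_pos.le]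
      have h2 : |2 * (k : ℝ) * Real.pi| - |η| ≤ |η + 2 * (k : ℝ) * Real.pi| := by
        have := abs_sub_abs_le_abs_sub (2 * (k : ℝ) * Real.pi) (-η)
        simp only [abs_neg, sub_neg_eq_add] at this
        calc |2 * (k : ℝ) * Real.pi| - |η| ≤ |2 * (k : ℝ) * Real.pi + η| := this
        _ = |η + 2 * (k : ℝ) * Real.pi| := by rw [add_comm]
      have hηabs : |η| = η := abs_of_pos hη
      nlinarith [Real.pi_pos]
    exact Real.rpow_le_rpow_of_nonpos (by positivity) hb (by linarith)

lemma summable_Kper {c η : ℝ} (hc : 1 < c) (hη : 0 < η) (hηπ : η ≤ Real.pi) :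
    Summable (fun k : ℤ => |η + 2 * (k : ℝ) * Real.pi| ^ (-c)) := by
  apply Summable.of_nonneg_of_le (fun k => Real.rpow_nonneg (abs_nonneg _) _)
    (term_le hc hη hηπ)
  exact Summable.add
    (summable_of_ne_finset_zero (s := {0}) (by intro k hk; simp at hk; simp [hk]))
    (summable_tail hc)

lemma Kper_nonneg (σ η : ℝ) : 0 ≤ Kper σ η :=
  tsum_nonneg fun k => Real.rpow_nonneg (abs_nonneg _) _

lemma Kper_lower {η : ℝ} (hα : 0 < α) (hη : 0 < η) (hηπ : η ≤ Real.pi) :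
    η ^ (-(1 + α)) ≤ Kper α η := by
  have hs := summable_Kper (c := 1 + α) (by linarith) hη hηπ
  have h := hs.le_tsum 0 (fun j _ => Real.rpow_nonneg (abs_nonneg _) _)
  rw [Kper]
  simpa [abs_of_pos hη] using h

lemma Kper_upper {η : ℝ} (hα : 0 < α) (hη : 0 < η) (hηπ : η ≤ Real.pi) :
    Kper α η ≤ η ^ (-(1 + α)) + Ctail (1 + α) := by
  have hc : (1:ℝ) < 1 + α := by linarith
  have hs := summable_Kper (c := 1 + α) hc hη hηπ
  have hg : Summable (fun k : ℤ =>
      (if k = 0 then η ^ (-(1+α)) else 0) + (Real.pi * |(k : ℝ)|) ^ (-(1+α))) :=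
    Summable.add
      (summable_of_ne_finset_zero (s := {0}) (by intro k hk; simp at hk; simp [hk]))
      (summable_tail hc)
  calc Kper α η ≤ ∑' k : ℤ,
        ((if k = 0 then η ^ (-(1+α)) else 0) + (Real.pi * |(k : ℝ)|) ^ (-(1+α))) :=
        Summable.tsum_le_tsum (term_le hc hη hηπ) hs hg
    _ = η ^ (-(1+α)) + Ctail (1 + α) := by
        rw [Summable.tsum_add
          (summable_of_ne_finset_zero (s := {0}) (by intro k hk; simp at hk; simp [hk]))
          (summable_tail hc)]
        congr 1
        exact tsum_ite_eq (0 : ℤ) _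

end Kernel

section Kernel2

variable {α : ℝ}

/-- multiplicative constant for kernel upper bound -/
noncomputable def Cker (α : ℝ) : ℝ := 1 + Ctail (1 + α) * Real.pi ^ (1 + α)

lemma Cker_pos (hα : 0 < α) : 0 < Cker α := by
  have := Ctail_nonneg (c := 1 + α)
  have : (0:ℝ) ≤ Ctail (1 + α) * Real.pi ^ (1 + α) :=
    mul_nonneg this (Real.rpow_nonneg Real.pi_pos.le _)
  unfold Cker; linarith

lemma Kper_upper' {η : ℝ} (hα : 0 < α) (hη : 0 < η) (hηπ : η ≤ Real.pi) :
    Kper α η ≤ Cker α * η ^ (-(1 + α)) := by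
  have h1 := Kper_upper hα hη hηπ
  have hπη : Real.pi ^ (-(1+α)) ≤ η ^ (-(1+α)) :=
    Real.rpow_le_rpow_of_nonpos hη hηπ (by linarith)
  have h2 : Ctail (1 + α) ≤ Ctail (1 + α) * Real.pi ^ (1 + α) * η ^ (-(1+α)) := by
    have hpi : Real.pi ^ (1 + α) * Real.pi ^ (-(1+α)) = 1 := by
      rw [← Real.rpow_add Real.pi_pos]
      rw [show (1 + α + -(1+α)) = 0 by ring, Real.rpow_zero]
    calc Ctail (1 + α) = Ctail (1 + α) * (Real.pi ^ (1 + α) * Real.pi ^ (-(1+α))) := by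
          rw [hpi, mul_one]
      _ ≤ Ctail (1 + α) * (Real.pi ^ (1 + α) * η ^ (-(1+α))) := by
          apply mul_le_mul_of_nonneg_left _ Ctail_nonneg
          exact mul_le_mul_of_nonneg_left hπη (Real.rpow_nonneg Real.pi_pos.le _)
      _ = Ctail (1 + α) * Real.pi ^ (1 + α) * η ^ (-(1+α)) := by ring
  calc Kper α η ≤ η ^ (-(1+α)) + Ctail (1 + α) := h1
    _ ≤ η ^ (-(1+α)) + Ctail (1 + α) * Real.pi ^ (1 + α) * η ^ (-(1+α)) := by linarith
    _ = Cker α * η ^ (-(1 + α)) := by unfold Cker; ring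

/-- ENNReal version of the kernel, measurable. -/
noncomputable def KE (α : ℝ) (η : ℝ) : ENNReal :=
  ∑' k : ℤ, ENNReal.ofReal (|η + 2 * (k : ℝ) * Real.pi| ^ (-(1 + α)))

lemma measurable_term (α : ℝ) (hα : 0 < α) (k : ℤ) :
    Measurable (fun η : ℝ => |η + 2 * (k : ℝ) * Real.pi| ^ (-(1 + α))) := by
  have key : (fun η : ℝ => |η + 2 * (k : ℝ) * Real.pi| ^ (-(1 + α)))
      = fun η : ℝ => (|η + 2 * (k : ℝ) * Real.pi|⁻¹) ^ (1 + α) := by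
    funext η
    rw [show (|η + 2 * (k : ℝ) * Real.pi|⁻¹) ^ (1 + α)
        = (|η + 2 * (k : ℝ) * Real.pi| ^ (-(1:ℝ))) ^ (1 + α) by
      rw [Real.rpow_neg_one]]
    rw [← Real.rpow_mul (abs_nonneg _)]
    norm_num
  rw [key]
  have hcont : Continuous (fun y : ℝ => y ^ (1 + α)) :=
    Real.continuous_rpow_const (by linarith)
  exact hcont.measurable.comp ((measurable_id.add_const _).abs.inv)

lemma measurable_KE (hα : 0 < α) : Measurable (KE α) :=
  Measurable.ennreal_tsum fun k => ENNReal.measurable_ofReal.comp (measurable_term α hα k)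

lemma KE_eq {η : ℝ} (hα : 0 < α) (hη : 0 < η) (hηπ : η ≤ Real.pi) :
    KE α η = ENNReal.ofReal (Kper α η) := by
  rw [Kper, ENNReal.ofReal_tsum_of_nonneg (fun k => Real.rpow_nonneg (abs_nonneg _) _)
    (summable_Kper (by linarith) hη hηπ)]
  rfl

end Kernel2

lemma lint_rpow {r δ : ℝ} (hr : r < -1) (hδ : 0 < δ) (hδπ : δ ≤ Real.pi) :
    ∫⁻ η in Set.Ioc δ Real.pi, ENNReal.ofReal (η ^ r)
      = ENNReal.ofReal ((δ ^ (r+1) - Real.pi ^ (r+1)) / (-(r+1))) := by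
  have hcont : ContinuousOn (fun η : ℝ => η ^ r) (Set.Icc δ Real.pi) := by
    apply ContinuousOn.rpow_const continuousOn_id
    intro y hy
    exact Or.inl (ne_of_gt (lt_of_lt_of_le hδ hy.1))
  have hInt : IntegrableOn (fun η : ℝ => η ^ r) (Set.Ioc δ Real.pi) volume :=
    (hcont.integrableOn_Icc).mono_set Set.Ioc_subset_Icc_self
  have hnn : 0 ≤ᵐ[volume.restrict (Set.Ioc δ Real.pi)] fun η : ℝ => η ^ r := by
    refine (ae_restrict_iff' measurableSet_Ioc).mpr (Filter.Eventually.of_forall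
      fun y hy => Real.rpow_nonneg (le_of_lt (lt_of_lt_of_le hδ hy.1.le)) _)
  rw [← MeasureTheory.ofReal_integral_eq_lintegral_ofReal hInt hnn]
  congr 1
  rw [← intervalIntegral.integral_of_le hδπ]
  rw [integral_rpow (Or.inr ⟨by linarith, by
    rw [Set.uIcc_of_le hδπ]; intro h; exact absurd h.1 (not_le.mpr hδ)⟩)]
  rw [div_neg, ← neg_div, neg_sub]

lemma per_bound {u : ℝ → ℝ} (hper : Function.Periodic u (2 * Real.pi)) (P : ℝ) (x : ℝ) :
    (∫ η in (-Real.pi)..Real.pi, (u (x - η)) ^ P)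
      = ∫ y in (-Real.pi)..Real.pi, (u y) ^ P := by
  have h1 := intervalIntegral.integral_comp_sub_left (a := -Real.pi) (b := Real.pi)
    (fun y => u y ^ P) x
  rw [h1, show x - -Real.pi = x + Real.pi from by ring]
  have hperw : Function.Periodic (fun y => u y ^ P) (2 * Real.pi) := by
    intro y; simp [hper y]
  have h2 := hperw.intervalIntegral_add_eq (x - Real.pi) (-Real.pi)
  have e1 : x - Real.pi + 2 * Real.pi = x + Real.pi := by ring
  have e2 : -Real.pi + 2 * Real.pi = Real.pi := by ring
  rw [e1, e2] at h2
  exact h2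

lemma cFrac_pos' {α : ℝ} (hα0 : 0 < α) (hα2 : α < 2) :
    0 < Real.Gamma (1 + α) * Real.cos ((1 - α) * Real.pi / 2) / Real.pi := by
  apply div_pos _ Real.pi_pos
  apply mul_pos (Real.Gamma_pos_of_pos (by linarith))
  apply Real.cos_pos_of_mem_Ioo
  constructor
  · have : (-1 : ℝ) < 1 - α := by linarith
    nlinarith [Real.pi_pos]
  · have : (1 : ℝ) - α < 1 := by linarith
    nlinarith [Real.pi_pos]

set_option maxHeartbeats 1000000 in
lemma keylem (α s γ M : ℝ) (hα0 : 0 < α) (hα2 : α < 2) (hs0 : 0 < s)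
    (hcrit : 1 - α < s / (2 * (s + 1))) (hγ : 0 < γ) (hM : 0 < M) :
    ∃ T : ℝ, 1 ≤ T ∧ ∀ u : ℝ → ℝ, Continuous u → Function.Periodic u (2 * Real.pi) →
      (∀ y, 0 ≤ u y) →
      (∫ y in (-Real.pi)..Real.pi, |u y| ^ (1 + s)) ^ (1 / (1 + s)) ≤ M →
      ∀ x : ℝ, T ≤ u x → ENNReal.ofReal (γ * u x ^ 3) ≤ IfracE α u x := by
  have hπ := Real.pi_pos
  set P : ℝ := 1 + s with hP_def
  set Q : ℝ := (1 + s) / s with hQ_def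
  have hP1 : 1 < P := by simp [hP_def]; linarith
  have hP0 : 0 < P := by linarith
  have hPQ : P.HolderConjugate Q := by
    refine (Real.holderConjugate_iff_eq_conjExponent hP1).mpr ?_
    · rw [hP_def, hQ_def, add_sub_cancel_left]
  have hQ1 : 1 < Q := by rw [hQ_def, lt_div_iff₀ hs0]; linarith
  have hQ0 : 0 < Q := by linarith
  set D : ℝ := (1 + α) * Q - 1 with hD_def
  have hD : 0 < D := by rw [hD_def]; nlinarith
  set cα : ℝ := cFrac α with hcα_def
  have hcα : 0 < cα := cFrac_pos' hα0 hα2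
  set C₁ : ℝ := Cker α with hC₁_def
  have hC₁ : 0 < C₁ := Cker_pos hα0
  set E : ℝ := 8 * α * M * C₁ / D ^ (1/Q) with hE_def
  have hDQpos : 0 < D ^ (1/Q) := Real.rpow_pos_of_pos hD _
  have hE : 0 < E := by rw [hE_def]; positivity
  set δ₀ : ℝ := Real.pi * 2 ^ (-(1/α)) with hδ₀_def
  have hδ₀ : 0 < δ₀ := by rw [hδ₀_def]; positivity
  have hδ₀π : δ₀ ≤ Real.pi := by
    rw [hδ₀_def]
    nlinarith [Real.rpow_le_one_of_one_le_of_nonpos (by norm_num : (1:ℝ) ≤ 2)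
      (neg_nonpos.mpr (by positivity) : -(1/α) ≤ 0)]
  have hPα : 1 < P * α := by
    have h1 : (1 + s) * (s / (2 * (s + 1))) = s / 2 := by field_simp; ring
    nlinarith
  set Z : ℝ := 4 * α * γ * E ^ (P * α) / cα with hZ_def
  have hZ : 0 < Z := by rw [hZ_def]; positivity
  set T₁ : ℝ := E / δ₀ ^ (1/P) with hT₁_def
  set T₂ : ℝ := Z ^ (1/(P*α - 1)) with hT₂_def
  refine ⟨max 1 (max T₁ T₂), le_max_left _ _, ?_⟩
  intro u hu hper hu0 hMb x hTa
  set a : ℝ := u x with ha_def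
  have ha1 : 1 ≤ a := le_trans (le_max_left _ _) hTa
  have ha0 : 0 < a := by linarith
  set δ : ℝ := (E / a) ^ P with hδ_def
  have hEa : 0 < E / a := div_pos hE ha0
  have hδ0 : 0 < δ := Real.rpow_pos_of_pos hEa _
  have hδδ₀ : δ ≤ δ₀ := by
    have hT₁a : T₁ ≤ a := le_trans (le_trans (le_max_left _ _) (le_max_right 1 _)) hTa
    have hX : 0 < δ₀ ^ (1/P) := Real.rpow_pos_of_pos hδ₀ _
    have h1 : E / a ≤ δ₀ ^ (1/P) := by
      rw [div_le_iff₀ ha0]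
      rw [hT₁_def] at hT₁a
      calc E = (E / δ₀ ^ (1/P)) * δ₀ ^ (1/P) := by field_simp
        _ ≤ a * δ₀ ^ (1/P) := by
            exact mul_le_mul_of_nonneg_right hT₁a hX.le
        _ = δ₀ ^ (1/P) * a := by ring
    calc δ = (E / a) ^ P := hδ_def
      _ ≤ (δ₀ ^ (1/P)) ^ P := Real.rpow_le_rpow hEa.le h1 hP0.le
      _ = δ₀ := by
          rw [← Real.rpow_mul hδ₀.le, one_div_mul_cancel hP0.ne', Real.rpow_one]
  have hδπ : δ ≤ Real.pi := le_trans hδδ₀ hδ₀π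
  have hδ2 : 2 * Real.pi ^ (-α) ≤ δ ^ (-α) := by
    have h1 : δ₀ ^ (-α) ≤ δ ^ (-α) :=
      Real.rpow_le_rpow_of_nonpos hδ0 hδδ₀ (by linarith)
    have h2 : δ₀ ^ (-α) = 2 * Real.pi ^ (-α) := by
      rw [hδ₀_def, Real.mul_rpow hπ.le (by positivity), ← Real.rpow_mul (by norm_num : (0:ℝ) ≤ 2)]
      rw [show -(1/α) * -α = 1 by field_simp, Real.rpow_one]
      ring
    linarith
  have hδinv : δ ^ (-(1/P)) = a / E := by
    rw [hδ_def, ← Real.rpow_mul hEa.le, show P * -(1/P) = -1 by field_simp,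
      Real.rpow_neg_one, inv_div]
  have hδα : δ ^ (-α) = a ^ (P*α) / E ^ (P*α) := by
    rw [hδ_def, ← Real.rpow_mul hEa.le, show P * -α = -(P*α) by ring,
      Real.rpow_neg hEa.le, Real.div_rpow hE.le ha0.le, inv_div]
  have haPα : Z ≤ a ^ (P*α - 1) := by
    have hT₂a : T₂ ≤ a := le_trans (le_trans (le_max_right _ _) (le_max_right 1 _)) hTa
    calc Z = (Z ^ (1/(P*α-1))) ^ (P*α-1) := by
          rw [← Real.rpow_mul hZ.le, one_div_mul_cancel (by linarith : P*α-1 ≠ 0),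
            Real.rpow_one]
      _ ≤ a ^ (P*α-1) := Real.rpow_le_rpow (Real.rpow_nonneg hZ.le _)
          (hT₂_def ▸ hT₂a) (by linarith)
    -- measure-theoretic part
  set S : Set ℝ := Set.Ioc δ Real.pi with hS_def
  have hSsub : S ⊆ Set.Ioc (-Real.pi) Real.pi :=
    Set.Ioc_subset_Ioc_left (by linarith)
  set KR : ℝ → ENNReal := fun η => ENNReal.ofReal (Kper α η) with hKR_def
  have hKRae : (fun η => KE α η) =ᵐ[volume.restrict S] KR := by
    rw [Filter.EventuallyEq, ae_restrict_iff' measurableSet_Ioc]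
    exact Filter.Eventually.of_forall fun η hη => KE_eq hα0 (hδ0.trans hη.1) hη.2
  have hKR : AEMeasurable KR (volume.restrict S) :=
    ((measurable_KE hα0).aemeasurable).congr hKRae
  set F : ℝ → ENNReal := fun η => ENNReal.ofReal (u (x - η)) with hF_def
  have hF : AEMeasurable F (volume.restrict S) :=
    (ENNReal.continuous_ofReal.comp (hu.comp (continuous_const.sub continuous_id))).measurable.aemeasurable
  -- splitting inequality
  have hmeas2 : AEMeasurable (fun η => ENNReal.ofReal (2*a*u (x - η) * Kper α η))
      (volume.restrict S) := by
    have heq : ∀ η, ENNReal.ofReal (2*a*u (x - η) * Kper α η)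
        = ENNReal.ofReal (2*a*u (x - η)) * KR η := fun η =>
      ENNReal.ofReal_mul (mul_nonneg (by positivity) (hu0 _))
    have hm : AEMeasurable (fun η => ENNReal.ofReal (2*a*u (x - η)) * KR η)
        (volume.restrict S) :=
      ((ENNReal.continuous_ofReal.comp ((continuous_const.mul
        (hu.comp (continuous_const.sub continuous_id))))).measurable.aemeasurable).mul hKR
    exact hm.congr (Filter.Eventually.of_forall fun η => (heq η).symm)
  have hsplit : (∫⁻ η in S, ENNReal.ofReal (a^2 * Kper α η))
      ≤ (∫⁻ η in S, ENNReal.ofReal ((a - u (x - η))^2 * Kper α η))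
        + ∫⁻ η in S, ENNReal.ofReal (2*a*u (x - η) * Kper α η) := by
    calc (∫⁻ η in S, ENNReal.ofReal (a^2 * Kper α η))
        ≤ ∫⁻ η in S, (ENNReal.ofReal ((a - u (x - η))^2 * Kper α η)
            + ENNReal.ofReal (2*a*u (x - η) * Kper α η)) := by
          apply lintegral_mono
          intro η
          calc ENNReal.ofReal (a^2 * Kper α η)
              ≤ ENNReal.ofReal ((a - u (x - η))^2 * Kper α η + 2*a*u (x - η) * Kper α η) := by
                apply ENNReal.ofReal_le_ofReal
                nlinarith [mul_nonneg (sq_nonneg (u (x - η))) (Kper_nonneg α η)]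
            _ ≤ _ := ENNReal.ofReal_add_le
      _ = _ := lintegral_add_right' _ hmeas2
  -- lower bound for the main term
  have hA : ENNReal.ofReal (a^2 * ((δ^(-α) - Real.pi^(-α))/α))
      ≤ ∫⁻ η in S, ENNReal.ofReal (a^2 * Kper α η) := by
    have e1 : ∀ η : ℝ, ENNReal.ofReal (a^2 * Kper α η)
        = ENNReal.ofReal (a^2) * KR η := fun η => ENNReal.ofReal_mul (by positivity)
    have h4 : ∫⁻ η in S, ENNReal.ofReal (η ^ (-(1+α)))
        = ENNReal.ofReal ((δ^(-α) - Real.pi^(-α))/α) := by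
      rw [lint_rpow (by linarith : -(1+α) < -1) hδ0 hδπ,
        show (-(1+α)+1 : ℝ) = -α by ring, neg_neg]
    have h3 : ENNReal.ofReal ((δ^(-α) - Real.pi^(-α))/α)
        ≤ ∫⁻ η in S, KR η := by
      rw [← h4]
      exact setLIntegral_mono' measurableSet_Ioc
        (fun η hη => ENNReal.ofReal_le_ofReal (Kper_lower hα0 (hδ0.trans hη.1) hη.2))
    calc ENNReal.ofReal (a^2 * ((δ^(-α) - Real.pi^(-α))/α))
        = ENNReal.ofReal (a^2) * ENNReal.ofReal ((δ^(-α) - Real.pi^(-α))/α) :=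
          ENNReal.ofReal_mul (by positivity)
      _ ≤ ENNReal.ofReal (a^2) * ∫⁻ η in S, KR η := mul_le_mul_right h3 _
      _ = ∫⁻ η in S, ENNReal.ofReal (a^2) * KR η :=
          (lintegral_const_mul' _ _ ENNReal.ofReal_ne_top).symm
      _ = ∫⁻ η in S, ENNReal.ofReal (a^2 * Kper α η) := by
          apply lintegral_congr
          intro η
          rw [e1 η]
  -- upper bound for the cross term
  have hGnn : 0 ≤ C₁ * δ^(-(α+1/P)) / D^(1/Q) := by
    apply div_nonneg (mul_nonneg hC₁.le (Real.rpow_nonneg hδ0.le _)) hDQpos.le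
  have hB : ∫⁻ η in S, ENNReal.ofReal (2*a*u (x - η) * Kper α η)
      ≤ ENNReal.ofReal (2*a*M*(C₁ * δ^(-(α+1/P)) / D^(1/Q))) := by
    have e1 : ∀ η : ℝ, ENNReal.ofReal (2*a*u (x - η) * Kper α η)
        = ENNReal.ofReal (2*a) * ((F * KR) η) := by
      intro η
      have h : 2*a*u (x - η) * Kper α η = (2*a) * (u (x - η) * Kper α η) := by ring
      rw [h, ENNReal.ofReal_mul (by positivity), ENNReal.ofReal_mul (hu0 _)]
      rfl
    have hXP : (∫⁻ η in S, F η ^ P) ≤ ENNReal.ofReal (M ^ P) := by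
      have e2 : ∀ η : ℝ, F η ^ P = ENNReal.ofReal (u (x - η) ^ P) := fun η =>
        ENNReal.ofReal_rpow_of_nonneg (hu0 _) hP0.le
      have hcontP : Continuous (fun η : ℝ => u (x - η) ^ P) :=
        (Real.continuous_rpow_const hP0.le).comp (hu.comp (continuous_const.sub continuous_id))
      have hXint : ∫ y in (-Real.pi)..Real.pi, |u y| ^ P ≤ M ^ P := by
        have hX0 : 0 ≤ ∫ y in (-Real.pi)..Real.pi, |u y| ^ P :=
          intervalIntegral.integral_nonneg (by linarith)
            (fun y _ => Real.rpow_nonneg (abs_nonneg _) _)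
        calc (∫ y in (-Real.pi)..Real.pi, |u y| ^ P)
            = ((∫ y in (-Real.pi)..Real.pi, |u y| ^ P) ^ (1/P)) ^ P := by
              rw [← Real.rpow_mul hX0, one_div_mul_cancel hP0.ne', Real.rpow_one]
          _ ≤ M ^ P := Real.rpow_le_rpow (Real.rpow_nonneg hX0 _) hMb hP0.le
      calc (∫⁻ η in S, F η ^ P)
          = ∫⁻ η in S, ENNReal.ofReal (u (x - η) ^ P) := by
            apply lintegral_congr; intro η; rw [e2 η]
        _ ≤ ∫⁻ η in Set.Ioc (-Real.pi) Real.pi, ENNReal.ofReal (u (x - η) ^ P) :=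
            lintegral_mono_set hSsub
        _ = ENNReal.ofReal (∫ η in Set.Ioc (-Real.pi) Real.pi, u (x - η) ^ P) :=
            (MeasureTheory.ofReal_integral_eq_lintegral_ofReal
              (hcontP.integrableOn_Ioc)
              (Filter.Eventually.of_forall fun η => Real.rpow_nonneg (hu0 _) _)).symm
        _ = ENNReal.ofReal (∫ η in (-Real.pi)..Real.pi, u (x - η) ^ P) := by
            rw [intervalIntegral.integral_of_le (by linarith)]
        _ = ENNReal.ofReal (∫ y in (-Real.pi)..Real.pi, u y ^ P) := by
            rw [per_bound hper]
        _ ≤ ENNReal.ofReal (M ^ P) := by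
            apply ENNReal.ofReal_le_ofReal
            have habs : (∫ y in (-Real.pi)..Real.pi, u y ^ P)
                = ∫ y in (-Real.pi)..Real.pi, |u y| ^ P :=
              intervalIntegral.integral_congr (fun y _ => by rw [abs_of_nonneg (hu0 y)])
            rw [habs]; exact hXint
    have hYQ : (∫⁻ η in S, KR η ^ Q) ≤ ENNReal.ofReal (C₁^Q * (δ^(-D)/D)) := by
      have hr' : -(1+α)*Q < -1 := by nlinarith
      have e3 : ∀ η ∈ S, KR η ^ Q ≤ ENNReal.ofReal (C₁^Q * η ^ (-(1+α)*Q)) := by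
        intro η hη
        have hη0 : 0 < η := hδ0.trans hη.1
        rw [show KR η ^ Q = ENNReal.ofReal (Kper α η ^ Q) from
          ENNReal.ofReal_rpow_of_nonneg (Kper_nonneg α η) hQ0.le]
        apply ENNReal.ofReal_le_ofReal
        calc Kper α η ^ Q ≤ (C₁ * η^(-(1+α)))^Q :=
            Real.rpow_le_rpow (Kper_nonneg α η) (Kper_upper' hα0 hη0 hη.2) hQ0.le
          _ = C₁^Q * η^(-(1+α)*Q) := by
            rw [Real.mul_rpow hC₁.le (Real.rpow_nonneg hη0.le _), ← Real.rpow_mul hη0.le]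
      calc (∫⁻ η in S, KR η ^ Q)
          ≤ ∫⁻ η in S, ENNReal.ofReal (C₁^Q * η ^ (-(1+α)*Q)) :=
            setLIntegral_mono' measurableSet_Ioc e3
        _ = ENNReal.ofReal (C₁^Q) * ∫⁻ η in S, ENNReal.ofReal (η ^ (-(1+α)*Q)) := by
            rw [← lintegral_const_mul' _ _ ENNReal.ofReal_ne_top]
            apply lintegral_congr
            intro η
            rw [ENNReal.ofReal_mul (by positivity : (0:ℝ) ≤ C₁^Q)]
        _ = ENNReal.ofReal (C₁^Q) * ENNReal.ofReal ((δ^(-D) - Real.pi^(-D))/D) := by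
            rw [lint_rpow hr' hδ0 hδπ,
              show (-(1+α)*Q + 1 : ℝ) = -D by rw [hD_def]; ring, neg_neg]
        _ ≤ ENNReal.ofReal (C₁^Q) * ENNReal.ofReal (δ^(-D)/D) := by
            apply mul_le_mul_right
            apply ENNReal.ofReal_le_ofReal
            apply (div_le_div_iff_of_pos_right hD).mpr
            nlinarith [Real.rpow_nonneg hπ.le (-D)]
        _ = ENNReal.ofReal (C₁^Q * (δ^(-D)/D)) := (ENNReal.ofReal_mul (by positivity)).symm
    have hfac1 : (∫⁻ η in S, F η ^ P) ^ (1/P) ≤ ENNReal.ofReal M := by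
      calc (∫⁻ η in S, F η ^ P) ^ (1/P)
          ≤ (ENNReal.ofReal (M ^ P)) ^ (1/P) := ENNReal.rpow_le_rpow hXP (by positivity)
        _ = ENNReal.ofReal ((M ^ P) ^ (1/P)) :=
            ENNReal.ofReal_rpow_of_nonneg (by positivity) (by positivity)
        _ = ENNReal.ofReal M := by
            rw [← Real.rpow_mul hM.le, mul_one_div_cancel hP0.ne', Real.rpow_one]
    have hfac2 : (∫⁻ η in S, KR η ^ Q) ^ (1/Q)
        ≤ ENNReal.ofReal (C₁ * δ^(-(α+1/P)) / D^(1/Q)) := by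
      have hrealeq : (C₁^Q * (δ^(-D)/D)) ^ (1/Q) = C₁ * δ^(-(α+1/P)) / D^(1/Q) := by
        rw [Real.mul_rpow (by positivity) (by positivity),
          Real.div_rpow (Real.rpow_nonneg hδ0.le _) hD.le,
          ← Real.rpow_mul hC₁.le, mul_one_div_cancel hQ0.ne', Real.rpow_one,
          ← Real.rpow_mul hδ0.le,
          show -D * (1/Q) = -(α+1/P) by
            rw [hD_def, hQ_def, hP_def]; field_simp; ring]
        ring
      calc (∫⁻ η in S, KR η ^ Q) ^ (1/Q)
          ≤ (ENNReal.ofReal (C₁^Q * (δ^(-D)/D))) ^ (1/Q) :=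
            ENNReal.rpow_le_rpow hYQ (by positivity)
        _ = ENNReal.ofReal ((C₁^Q * (δ^(-D)/D)) ^ (1/Q)) :=
            ENNReal.ofReal_rpow_of_nonneg (by positivity) (by positivity)
        _ = ENNReal.ofReal (C₁ * δ^(-(α+1/P)) / D^(1/Q)) := by rw [hrealeq]
    calc (∫⁻ η in S, ENNReal.ofReal (2*a*u (x - η) * Kper α η))
        = ∫⁻ η in S, ENNReal.ofReal (2*a) * ((F * KR) η) := by
          apply lintegral_congr; intro η; rw [e1 η]
      _ = ENNReal.ofReal (2*a) * ∫⁻ η in S, (F * KR) η :=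
          lintegral_const_mul' _ _ ENNReal.ofReal_ne_top
      _ ≤ ENNReal.ofReal (2*a) * ((∫⁻ η in S, F η ^ P) ^ (1/P) * (∫⁻ η in S, KR η ^ Q) ^ (1/Q)) :=
          mul_le_mul_right (ENNReal.lintegral_mul_le_Lp_mul_Lq _ hPQ hF hKR) _
      _ ≤ ENNReal.ofReal (2*a) * (ENNReal.ofReal M * ENNReal.ofReal (C₁ * δ^(-(α+1/P)) / D^(1/Q))) :=
          mul_le_mul_right (mul_le_mul' hfac1 hfac2) _
      _ = ENNReal.ofReal (2*a*M*(C₁ * δ^(-(α+1/P)) / D^(1/Q))) := by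
          rw [← ENNReal.ofReal_mul hM.le, ← ENNReal.ofReal_mul (by positivity)]
          ring_nf
  -- the real inequality
  have hreal : γ*a^3 + cα*(2*a*M*(C₁ * δ^(-(α+1/P)) / D^(1/Q)))
      ≤ cα*(a^2*((δ^(-α) - Real.pi^(-α))/α)) := by
    have hsplitδ : δ ^ (-(α+1/P)) = δ^(-α) * (a/E) := by
      rw [show -(α+1/P) = -α + -(1/P) by ring, Real.rpow_add hδ0, hδinv]
    have hterm : 2*a*M*(C₁ * δ^(-(α+1/P)) / D^(1/Q)) = a^2*δ^(-α)/(4*α) := by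
      rw [hsplitδ, hE_def]
      field_simp
      ring
    have hγa : γ*a^3 ≤ cα * (a^2*δ^(-α))/(4*α) := by
      have h2 : a^(P*α) = a^(P*α-1) * a := by
        rw [← Real.rpow_add_one ha0.ne' (P*α-1)]
        norm_num
      have h1 : 4*α*γ*E^(P*α) * a ≤ cα * a^(P*α) := by
        rw [h2]
        calc 4*α*γ*E^(P*α)*a = (cα * Z) * a := by
              rw [hZ_def]; field_simp
          _ ≤ (cα * a^(P*α-1)) * a :=
              mul_le_mul_of_nonneg_right (mul_le_mul_of_nonneg_left haPα hcα.le) ha0.le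
          _ = cα * (a^(P*α-1)*a) := by ring
      have hEp : 0 < E^(P*α) := Real.rpow_pos_of_pos hE _
      rw [hδα, le_div_iff₀ (by positivity : (0:ℝ) < 4*α)]
      have h3 := mul_le_mul_of_nonneg_right h1 (by positivity : (0:ℝ) ≤ a^2 / E^(P*α))
      calc γ*a^3*(4*α) = 4*α*γ*E^(P*α)*a * (a^2/E^(P*α)) := by field_simp
        _ ≤ cα * a^(P*α) * (a^2/E^(P*α)) := h3
        _ = cα * (a^2 * (a^(P*α)/E^(P*α))) := by ring
    have hJ : δ^(-α)/(2*α) ≤ (δ^(-α) - Real.pi^(-α))/α := by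
      rw [div_le_div_iff₀ (by positivity) hα0]
      nlinarith
    have hpos : (0:ℝ) ≤ cα * a^2 := by positivity
    calc γ*a^3 + cα*(2*a*M*(C₁ * δ^(-(α+1/P)) / D^(1/Q)))
        = γ*a^3 + cα*(a^2*δ^(-α)/(4*α)) := by rw [hterm]
      _ ≤ cα*(a^2*δ^(-α))/(4*α) + cα*(a^2*δ^(-α)/(4*α)) := by linarith
      _ = (cα*a^2)*(δ^(-α)/(2*α)) := by ring
      _ ≤ (cα*a^2)*((δ^(-α) - Real.pi^(-α))/α) := mul_le_mul_of_nonneg_left hJ hpos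
      _ = cα*(a^2*((δ^(-α) - Real.pi^(-α))/α)) := by ring
  -- assemble in ENNReal
  have hBne : ENNReal.ofReal cα * (∫⁻ η in S, ENNReal.ofReal (2*a*u (x - η) * Kper α η)) ≠ ⊤ := by
    apply ne_top_of_le_ne_top (b := ENNReal.ofReal cα * ENNReal.ofReal (2*a*M*(C₁ * δ^(-(α+1/P)) / D^(1/Q))))
    · exact ENNReal.mul_ne_top ENNReal.ofReal_ne_top ENNReal.ofReal_ne_top
    · exact mul_le_mul_right hB _
  have hchain : ENNReal.ofReal (γ*a^3)
      + ENNReal.ofReal cα * (∫⁻ η in S, ENNReal.ofReal (2*a*u (x - η) * Kper α η))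
      ≤ ENNReal.ofReal cα * (∫⁻ η in S, ENNReal.ofReal ((a - u (x - η))^2 * Kper α η))
      + ENNReal.ofReal cα * (∫⁻ η in S, ENNReal.ofReal (2*a*u (x - η) * Kper α η)) := by
    calc ENNReal.ofReal (γ*a^3)
        + ENNReal.ofReal cα * (∫⁻ η in S, ENNReal.ofReal (2*a*u (x - η) * Kper α η))
        ≤ ENNReal.ofReal (γ*a^3)
          + ENNReal.ofReal cα * ENNReal.ofReal (2*a*M*(C₁ * δ^(-(α+1/P)) / D^(1/Q))) :=
          add_le_add le_rfl (mul_le_mul_right hB _)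
      _ = ENNReal.ofReal (γ*a^3 + cα*(2*a*M*(C₁ * δ^(-(α+1/P)) / D^(1/Q)))) := by
          rw [← ENNReal.ofReal_mul hcα.le,
            ← ENNReal.ofReal_add (by positivity) (mul_nonneg hcα.le (by positivity))]
      _ ≤ ENNReal.ofReal (cα*(a^2*((δ^(-α) - Real.pi^(-α))/α))) := ENNReal.ofReal_le_ofReal hreal
      _ = ENNReal.ofReal cα * ENNReal.ofReal (a^2*((δ^(-α) - Real.pi^(-α))/α)) :=
          ENNReal.ofReal_mul hcα.le
      _ ≤ ENNReal.ofReal cα * (∫⁻ η in S, ENNReal.ofReal (a^2 * Kper α η)) :=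
          mul_le_mul_right hA _
      _ ≤ ENNReal.ofReal cα * ((∫⁻ η in S, ENNReal.ofReal ((a - u (x - η))^2 * Kper α η))
          + ∫⁻ η in S, ENNReal.ofReal (2*a*u (x - η) * Kper α η)) :=
          mul_le_mul_right hsplit _
      _ = _ := by rw [mul_add]
  have hfinal : ENNReal.ofReal (γ*a^3)
      ≤ ENNReal.ofReal cα * (∫⁻ η in S, ENNReal.ofReal ((a - u (x - η))^2 * Kper α η)) :=
    (ENNReal.add_le_add_iff_right hBne).mp hchain
  calc ENNReal.ofReal (γ * a^3) ≤ ENNReal.ofReal cα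
      * (∫⁻ η in S, ENNReal.ofReal ((a - u (x - η))^2 * Kper α η)) := hfinal
    _ ≤ ENNReal.ofReal cα * (∫⁻ η in Set.Ioc (-Real.pi) Real.pi,
        ENNReal.ofReal ((a - u (x - η))^2 * Kper α η)) :=
        mul_le_mul_right (lintegral_mono_set hSsub) _
    _ = IfracE α u x := rfl

theorem stmt13 (α s : ℝ) (hα0 : 0 < α) (hα2 : α < 2) (hs0 : 0 < s)
    (hcrit : 1 - α < s / (2 * (s + 1))) :
    (1 + α - s / (2 * (s + 1))) / α < 3 ∧
    ∀ γ N M : ℝ, 0 < γ → 0 < N → 0 < M →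
      ∃ C : ℝ, 0 < C ∧
        ∀ u : ℝ → ℝ, Continuous u → Function.Periodic u (2 * Real.pi) →
          (∀ x, 0 ≤ u x) →
          (∫ x in (-Real.pi)..Real.pi, u x) ≤ N →
          (∫ x in (-Real.pi)..Real.pi, |u x| ^ (1 + s)) ^ (1 / (1 + s)) ≤ M →
          ∀ x : ℝ,
            ENNReal.ofReal (γ * u x ^ 3
                - C * (u x ^ ((1 + α - s / (2 * (s + 1))) / α) + u x + 1))
              ≤ IfracE α u x := by
  constructor
  · rw [div_lt_iff₀ hα0]
    linarith
  intro γ N M hγ hN hM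
  obtain ⟨T, hT1, hkey⟩ := keylem α s γ M hα0 hα2 hs0 hcrit hγ hM
  refine ⟨γ * T^3 + 1, by positivity, ?_⟩
  intro u hu hper hu0 hNb hMb x
  have hCpos : (0:ℝ) < γ * T^3 + 1 := by positivity
  have hrnn : 0 ≤ u x ^ ((1 + α - s / (2 * (s + 1))) / α) := Real.rpow_nonneg (hu0 x) _
  rcases le_or_gt T (u x) with hcase | hcase
  · have h1 : γ * u x ^ 3
        - (γ*T^3+1) * (u x ^ ((1 + α - s / (2 * (s + 1))) / α) + u x + 1) ≤ γ * u x ^ 3 := by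
      have h0 : 0 ≤ (γ*T^3+1) * (u x ^ ((1 + α - s / (2 * (s + 1))) / α) + u x + 1) :=
        mul_nonneg hCpos.le (by linarith [hu0 x])
      linarith
    exact le_trans (ENNReal.ofReal_le_ofReal h1) (hkey u hu hper hu0 hMb x hcase)
  · have h3 : u x ^ 3 ≤ T^3 := pow_le_pow_left₀ (hu0 x) hcase.le 3
    have h4 : (1:ℝ) ≤ u x ^ ((1 + α - s / (2 * (s + 1))) / α) + u x + 1 := by
      linarith [hu0 x]
    have h5 : (γ*T^3+1) * 1 ≤ (γ*T^3+1) * (u x ^ ((1 + α - s / (2 * (s + 1))) / α) + u x + 1) :=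
      mul_le_mul_of_nonneg_left h4 hCpos.le
    have h2 : γ * u x ^ 3
        - (γ*T^3+1) * (u x ^ ((1 + α - s / (2 * (s + 1))) / α) + u x + 1) ≤ 0 := by
      nlinarith [mul_le_mul_of_nonneg_left h3 hγ.le]
    calc ENNReal.ofReal (γ * u x ^ 3
          - (γ*T^3+1) * (u x ^ ((1 + α - s / (2 * (s + 1))) / α) + u x + 1))
        = 0 := ENNReal.ofReal_eq_zero.mpr h2
      _ ≤ IfracE α u x := by simp
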